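/- If γ is obtained from α by a single left swap (exchanging parts α_i < α_j with i < j, yielding the smaller composition γ), then γ ≤ α in the Bruhat order on weak compositions. -/

import Mathlib

/-- The `j`-th largest element (0-indexed) of a finite set of `Fin n`,
viewed as an element of `[n] = {1,...,n}` via `i ↦ i + 1`; `0` as default. -/
def jthLargestF (n : ℕ) (S : Finset (Fin n)) (j : ℕ) : ℕ :=
  (((Finset.sort S (· ≤ ·)).reverse).map (fun i => (i : ℕ) + 1)).getD j 0

/-- The `j`-th smallest element (0-indexed), similarly. -/
def jthSmallestF (n : ℕ) (S : Finset (Fin n)) (j : ℕ) : ℕ :=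
  ((Finset.sort S (· ≤ ·)).map (fun i => (i : ℕ) + 1)).getD j 0

/-- Order on subsets of `[n]`: equal cardinality and `j`-th largest elements compare. -/
def setLEF (n : ℕ) (S T : Finset (Fin n)) : Prop :=
  S.card = T.card ∧ ∀ j < S.card, jthLargestF n S j ≤ jthLargestF n T j

/-- The `c`-th column of the key tableau of the weak composition `α`: `{i : α i ≥ c}`. -/
def col (n : ℕ) (α : Fin n → ℕ) (c : ℕ) : Finset (Fin n) :=
  Finset.univ.filter (fun i => c ≤ α i)

/-- The support of a weak composition. -/
def suppC (n : ℕ) (α : Fin n → ℕ) : Finset (Fin n) :=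
  Finset.univ.filter (fun i => 0 < α i)

/-- Bruhat order on weak compositions: key tableaux have the same shape and
compare entry-wise, expressed column by column. -/
def bruhatLE (n : ℕ) (γ α : Fin n → ℕ) : Prop :=
  ∀ c : ℕ, 1 ≤ c → setLEF n (col n γ c) (col n α c)

/-- `μ` is the Bruhat-minimum of `{γ : γ ≥ α, supp γ ⊆ S}`. -/
def isBruhatMin (n : ℕ) (α : Fin n → ℕ) (S : Finset (Fin n)) (μ : Fin n → ℕ) : Prop :=
  bruhatLE n α μ ∧ suppC n μ ⊆ S ∧
    ∀ γ : Fin n → ℕ, bruhatLE n α γ → suppC n γ ⊆ S → bruhatLE n μ γ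

/-- `μ` is the Bruhat-maximum of `{γ : γ ≤ α, supp γ ⊆ S}`. -/
def isBruhatMax (n : ℕ) (α : Fin n → ℕ) (S : Finset (Fin n)) (μ : Fin n → ℕ) : Prop :=
  bruhatLE n μ α ∧ suppC n μ ⊆ S ∧
    ∀ γ : Fin n → ℕ, bruhatLE n γ α → suppC n γ ⊆ S → bruhatLE n γ μ

/-- `γ` is obtained from `α` by a single left swap: exchange parts `α i < α j` with `i < j`. -/
def leftSwapStep (n : ℕ) (γ α : Fin n → ℕ) : Prop :=
  ∃ i j : Fin n, i < j ∧ α i < α j ∧ γ = fun k => α (Equiv.swap i j k)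

/-- The left swap order: reflexive-transitive closure of single left swaps. -/
def leftSwapLE (n : ℕ) (γ α : Fin n → ℕ) : Prop :=
  Relation.ReflTransGen (leftSwapStep n) γ α

/-- `B = C ◁ A`: there is a strictly increasing choice `b` of elements of `C`,
`b k` being the smallest element of `C` that is `≥` the `k`-th smallest element
of `A` and exceeds all previously chosen elements, with `B` the set of chosen elements. -/
def isLhd (n : ℕ) (C A B : Finset (Fin n)) : Prop :=
  ∃ b : Fin A.card → Fin n, StrictMono b ∧ (∀ k, b k ∈ C) ∧
    (∀ k : Fin A.card, jthSmallestF n A k ≤ (b k : ℕ) + 1) ∧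
    (∀ k : Fin A.card, ∀ c ∈ C, jthSmallestF n A k ≤ (c : ℕ) + 1 →
      (∀ j : Fin A.card, j < k → b j < c) → b k ≤ c) ∧
    B = Finset.image b Finset.univ

/-- `lhdChain [C₁, ..., C_k] B` means `B = C₁ ◁ (C₂ ◁ (⋯ ◁ C_k))`. -/
def lhdChain (n : ℕ) : List (Finset (Fin n)) → Finset (Fin n) → Prop
  | [], B => B = ∅
  | [C], B => B = C
  | C :: D :: rest, B => ∃ B', lhdChain n (D :: rest) B' ∧ isLhd n C B' B

/-- `T ∈ RSSYT(α)`: a reverse semistandard Young tableau of shape `α⁺`, encoded by its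
columns (strictly decreasing sets, rows weakly decreasing), whose left key is
entry-wise at most `key α`. -/
def memRSSYT (n : ℕ) (α : Fin n → ℕ) (T : ℕ → Finset (Fin n)) : Prop :=
  (∀ c, 1 ≤ c → (T c).card = (col n α c).card) ∧
  (∀ c, 1 ≤ c → ∀ k < (T (c+1)).card, jthLargestF n (T (c+1)) k ≤ jthLargestF n (T c) k) ∧
  (∀ c, 1 ≤ c → ∃ B, lhdChain n ((List.range c).map (fun i => T (i+1))) B ∧
    setLEF n B (col n α c))

/-- `(L, E) ∈ RSVT(α)`: a reverse set-valued tableau of shape `α⁺` encoded as a diagram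
pair by columns: `L c` the leading entries and `E c` the extra entries of column `c`,
with left key (of the leading tableau) entry-wise at most `key α`. -/
def memRSVT (n : ℕ) (α : Fin n → ℕ) (L E : ℕ → Finset (Fin n)) : Prop :=
  (∀ c, 1 ≤ c → Disjoint (L c) (E c)) ∧
  (∀ c, 1 ≤ c → (L c).card = (col n α c).card) ∧
  (∀ c, 1 ≤ c → ∀ k < (L (c+1)).card, jthLargestF n (L (c+1)) k ≤ jthLargestF n (L c) k) ∧
  (∀ c, 1 ≤ c → ∀ e ∈ E c,
    ((L (c+1)).filter (fun l => e < l)).card < ((L c).filter (fun l => e < l)).card) ∧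
  (∀ c, 1 ≤ c → ∃ B, lhdChain n ((List.range c).map (fun i => L (i+1))) B ∧
    setLEF n B (col n α c))

/-- `(L, E)` is a valid reverse set-valued tableau (of some shape), without any
left-key condition. -/
def isValidRSVT (n : ℕ) (L E : ℕ → Finset (Fin n)) : Prop :=
  (∀ c, 1 ≤ c → Disjoint (L c) (E c)) ∧
  (∀ c, 1 ≤ c → (L (c+1)).card ≤ (L c).card) ∧
  (∃ N, ∀ c, N ≤ c → L c = ∅ ∧ E c = ∅) ∧
  (∀ c, 1 ≤ c → ∀ k < (L (c+1)).card, jthLargestF n (L (c+1)) k ≤ jthLargestF n (L c) k) ∧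
  (∀ c, 1 ≤ c → ∀ e ∈ E c,
    ((L (c+1)).filter (fun l => e < l)).card < ((L c).filter (fun l => e < l)).card)

/-- `j`-th largest element of a finite set of naturals (0-indexed), default `0`. -/
def jthLargestN (S : Finset ℕ) (j : ℕ) : ℕ :=
  ((Finset.sort S (· ≤ ·)).reverse).getD j 0

/-- `j`-th smallest element of a finite set of naturals (0-indexed), default `0`. -/
def jthSmallestN (S : Finset ℕ) (j : ℕ) : ℕ :=
  (Finset.sort S (· ≤ ·)).getD j 0

lemma jthLargestF_norm (n : ℕ) (S : Finset (Fin n)) (j : ℕ) : jthLargestF n S j =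
    (((Finset.sort S (· ≤ ·)).reverse).map (fun i : Fin n => i.val + 1)).getD j 0 := by
  have h : ∀ (l : List (Fin n)), (l.flatMap fun a => [(a:ℕ)]) = l.map Fin.val := by
    intro l; induction l with
    | nil => rfl
    | cons a t ih => simp_all [List.flatMap_cons]
  have h' : ∀ l : List (Fin n), List.flatMap (fun a : Fin n => [(a:ℕ)]) l = l.map Fin.val := by
    intro l; induction l <;> simp_all [List.flatMap_cons]
  simp [jthLargestF, List.map_eq_map, h, h', List.map_map, Function.comp_def, List.map_reverse]

lemma jthLargestF_eq (n : ℕ) (S : Finset (Fin n)) (j : ℕ) (hj : j < S.card) :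
    jthLargestF n S j = (S.orderEmbOfFin rfl ⟨S.card - 1 - j, by omega⟩ : ℕ) + 1 := by
  have hlen : (Finset.sort S (· ≤ ·)).length = S.card := Finset.length_sort _
  rw [jthLargestF_norm, List.getD_eq_getElem _ _
      (by rw [List.length_map, List.length_reverse, hlen]; exact hj),
      List.getElem_map, List.getElem_reverse, Finset.orderEmbOfFin_apply]
  simp [hlen]

lemma count_le_iff (n : ℕ) (S : Finset (Fin n)) (a : Fin n) (j : ℕ) (hj : j < S.card) :
    j + 1 ≤ (S.filter (fun y => a ≤ y)).card ↔
      a ≤ S.orderEmbOfFin rfl ⟨S.card - 1 - j, by omega⟩ := by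
  set e := S.orderEmbOfFin rfl with he
  have hmem : ∀ x, x ∈ S ↔ ∃ k, e k = x := by
    intro x
    constructor
    · intro hx
      have : x ∈ Set.range e := by rw [he, Finset.range_orderEmbOfFin]; exact hx
      exact this
    · rintro ⟨k, rfl⟩; exact Finset.orderEmbOfFin_mem S rfl k
  have himg : S.filter (fun y => a ≤ y)
      = Finset.image e (Finset.univ.filter (fun k => a ≤ e k)) := by
    ext x
    simp only [Finset.mem_filter, Finset.mem_image, Finset.mem_univ, true_and]
    constructor
    · rintro ⟨hx, hax⟩
      obtain ⟨k, rfl⟩ := (hmem x).1 hx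
      exact ⟨k, hax, rfl⟩
    · rintro ⟨k, hk, rfl⟩
      exact ⟨(hmem _).2 ⟨k, rfl⟩, hk⟩
  have hcount : (S.filter (fun y => a ≤ y)).card
      = (Finset.univ.filter (fun k : Fin S.card => a ≤ e k)).card := by
    rw [himg, Finset.card_image_of_injective _ e.injective]
  set m : Fin S.card := ⟨S.card - 1 - j, by omega⟩ with hm
  have hmv : (m : ℕ) = S.card - 1 - j := rfl
  rw [hcount]
  constructor
  · intro hle
    by_contra hlt
    push_neg at hlt
    have hsub : (Finset.univ.filter (fun k : Fin S.card => a ≤ e k)) ⊆ Finset.Ioi m := by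
      intro k hk
      simp only [Finset.mem_filter] at hk
      simp only [Finset.mem_Ioi]
      by_contra hkm
      push_neg at hkm
      exact absurd (le_trans hk.2 (e.monotone hkm)) (not_le.mpr hlt)
    have hcc := Finset.card_le_card hsub
    rw [Fin.card_Ioi, hmv] at hcc
    omega
  · intro ham
    have hsub : Finset.Ici m ⊆ (Finset.univ.filter (fun k : Fin S.card => a ≤ e k)) := by
      intro k hk
      simp only [Finset.mem_Ici] at hk
      simp only [Finset.mem_filter, Finset.mem_univ, true_and]
      exact le_trans ham (e.monotone hk)
    have hcc := Finset.card_le_card hsub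
    rw [Fin.card_Ici, hmv] at hcc
    omega

lemma setLEF_of_counts (n : ℕ) (S T : Finset (Fin n)) (hcard : S.card = T.card)
    (h : ∀ a : Fin n, (S.filter (fun y => a ≤ y)).card ≤ (T.filter (fun y => a ≤ y)).card) :
    setLEF n S T := by
  refine ⟨hcard, fun j hj => ?_⟩
  have hj' : j < T.card := hcard ▸ hj
  set a := S.orderEmbOfFin rfl ⟨S.card - 1 - j, by omega⟩ with ha
  have h1 : j + 1 ≤ (S.filter (fun y => a ≤ y)).card := (count_le_iff n S a j hj).2 le_rfl
  have h2 : a ≤ T.orderEmbOfFin rfl ⟨T.card - 1 - j, by omega⟩ :=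
    (count_le_iff n T a j hj').1 (le_trans h1 (h a))
  rw [jthLargestF_eq n S j hj, jthLargestF_eq n T j hj']
  exact Nat.succ_le_succ h2

/-- a single left swap decreases in the Bruhat order. -/
theorem stmt8 (n : ℕ) (α γ : Fin n → ℕ) (h : leftSwapStep n γ α) :
    bruhatLE n γ α := by
  obtain ⟨i, j, hij, hα, hγ⟩ := h
  intro c _
  have hcolγ : col n γ c = (col n α c).image (Equiv.swap i j) := by
    ext k
    simp only [col, hγ, Finset.mem_filter, Finset.mem_univ, true_and, Finset.mem_image]
    constructor
    · intro hk
      exact ⟨Equiv.swap i j k, hk, Equiv.swap_apply_self i j k⟩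
    · rintro ⟨m, hm, rfl⟩
      rwa [Equiv.swap_apply_self]
  have hcard : (col n γ c).card = (col n α c).card := by
    rw [hcolγ, Finset.card_image_of_injective _ (Equiv.swap i j).injective]
  apply setLEF_of_counts n _ _ hcard
  intro a
  -- injection φ from filtered γ-column to filtered α-column
  set φ : Fin n → Fin n := fun k => if c ≤ α k then k else Equiv.swap i j k with hφ
  -- characterize membership in filtered γ-column
  have hmemγ : ∀ k, k ∈ (col n γ c).filter (fun y => a ≤ y) ↔
      (c ≤ α (Equiv.swap i j k) ∧ a ≤ k) := by
    intro k
    simp [col, hγ, Finset.mem_filter]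
  have hmemα : ∀ k, k ∈ (col n α c).filter (fun y => a ≤ y) ↔ (c ≤ α k ∧ a ≤ k) := by
    intro k
    simp [col, Finset.mem_filter]
  -- key structural fact: if k is in γ-set but not an α-column member, then k = i
  have hforce : ∀ k, c ≤ α (Equiv.swap i j k) → ¬ c ≤ α k → k = i := by
    intro k h1 h2
    by_cases hki : k = i
    · exact hki
    by_cases hkj : k = j
    · subst hkj
      rw [Equiv.swap_apply_right] at h1
      exact absurd (le_trans h1 (le_of_lt hα)) h2
    · rw [Equiv.swap_apply_of_ne_of_ne hki hkj] at h1
      exact absurd h1 h2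
  apply Finset.card_le_card_of_injOn φ
  · intro k hk
    rw [Finset.mem_coe, hmemγ] at hk
    rw [Finset.mem_coe, hmemα]
    by_cases hck : c ≤ α k
    · simp only [hφ, if_pos hck]
      exact ⟨hck, hk.2⟩
    · have hki : k = i := hforce k hk.1 hck
      have hswap : Equiv.swap i j k = j := by rw [hki, Equiv.swap_apply_left]
      have hcj : c ≤ α j := by have := hk.1; rwa [hswap] at this
      simp only [hφ, if_neg hck]
      rw [hswap]
      exact ⟨hcj, le_trans hk.2 (hki ▸ le_of_lt hij)⟩
  · intro k₁ hk₁ k₂ hk₂ heq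
    simp only [Finset.mem_coe, hmemγ] at hk₁ hk₂
    by_cases h1 : c ≤ α k₁ <;> by_cases h2 : c ≤ α k₂
    · simpa [hφ, h1, h2] using heq
    · have hki : k₂ = i := hforce k₂ hk₂.1 h2
      rw [hki] at h2
      have hk1j : k₁ = j := by
        simpa [hφ, h1, h2, hki, Equiv.swap_apply_left] using heq
      have hci : c ≤ α i := by
        have := hk₁.1
        rwa [hk1j, Equiv.swap_apply_right] at this
      exact absurd hci h2
    · have hki : k₁ = i := hforce k₁ hk₁.1 h1
      rw [hki] at h1
      have hk2j : k₂ = j := by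
        have := heq.symm
        simpa [hφ, h1, h2, hki, Equiv.swap_apply_left] using this
      have hci : c ≤ α i := by
        have := hk₂.1
        rwa [hk2j, Equiv.swap_apply_right] at this
      exact absurd hci h1
    · rw [hforce k₁ hk₁.1 h1, hforce k₂ hk₂.1 h2]
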